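/- Maximality of Sω: Let Sω be the infinite symmetric group of finitely supported permutations of ℕ⁺, presented by Coxeter generators σ_i. If t is an element of Sω with t ≠ 1, and X is the quotient of Sω by the additional relation t = 1, then in X all generators coincide: σ_m = σ_n in X for all m, n ∈ ℕ⁺. -/

import Mathlib

open FreeGroup in
/-- The Coxeter relations presenting the infinite symmetric group `Sω` of finitely supported
permutations of `ℕ⁺`: `σ_i² = 1`, `σ_{i+1} σ_i σ_{i+1} = σ_i σ_{i+1} σ_i`, and
`σ_{k+2} σ_j = σ_j σ_{k+2}` for `j ≤ k`. -/
def SomegaRels : Set (FreeGroup ℕ+) :=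
  {w | (∃ i : ℕ+, w = of i * of i) ∨
    (∃ i : ℕ+, w = (of (i + 1) * of i * of (i + 1)) * (of i * of (i + 1) * of i)⁻¹) ∨
    (∃ j k : ℕ+, j ≤ k ∧ w = (of (k + 2) * of j) * (of j * of (k + 2))⁻¹)}

/-- The infinite symmetric group `Sω`, presented by the Coxeter generators `σ_i`. -/
def Somega : Type := PresentedGroup SomegaRels

instance : Group Somega := by unfold Somega; infer_instance

/-- The generator `σ_i` (the transposition of `i` and `i+1`) of `Sω`. -/
def Somega.sigma (i : ℕ+) : Somega := PresentedGroup.of i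

open Equiv
section SOmHelpers
variable {α : Type*} [DecidableEq α]
theorem my_braid {a b c : α} (hab : a ≠ b) (hbc : b ≠ c) (hac : a ≠ c) :
    swap b c * swap a b * swap b c = swap a b * swap b c * swap a b := by
  rw [swap_mul_swap_mul_swap hab hac]
  rw [swap_comm a b, swap_comm b c, swap_mul_swap_mul_swap hbc.symm hac.symm, swap_comm c a]

theorem my_comm {a b c d : α} (h1 : a ≠ c) (h2 : a ≠ d) (h3 : b ≠ c)
    (h4 : b ≠ d) : swap a b * swap c d = swap c d * swap a b := by
  ext x
  simp only [Perm.mul_apply, swap_apply_def]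
  split_ifs <;> simp_all

lemma pne {i j : ℕ+} (h : (i:ℕ) ≠ (j:ℕ)) : i ≠ j := fun e => h (congrArg _ e)
end SOmHelpers

namespace SOm

def sw (i : ℕ+) : Perm ℕ+ := swap i (i+1)

lemma sw_rels : ∀ r ∈ SomegaRels, FreeGroup.lift sw r = 1 := by
  rintro r (⟨i, rfl⟩ | ⟨i, rfl⟩ | ⟨j, k, hjk, rfl⟩) <;>
      simp only [map_mul, map_inv, FreeGroup.lift_apply_of, mul_inv_eq_one, sw]
  · exact swap_mul_self _ _
  · exact (my_braid (a := i) (b := i+1) (c := i+1+1) (pne (by push_cast; omega))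
      (pne (by push_cast; omega)) (pne (by push_cast; omega)))
  · have hjk' := (PNat.coe_le_coe _ _).2 hjk
    exact my_comm (a := k+2) (b := k+2+1) (c := j) (d := j+1) (pne (by push_cast; omega))
      (pne (by push_cast; omega)) (pne (by push_cast; omega)) (pne (by push_cast; omega))

def π : Somega →* Perm ℕ+ := PresentedGroup.toGroup sw_rels

@[simp] lemma π_sigma (i : ℕ+) : π (Somega.sigma i) = swap i (i+1) :=
  PresentedGroup.toGroup.of sw_rels

end SOm

namespace SOm

lemma rel_one {w : FreeGroup ℕ+} (hw : w ∈ SomegaRels) :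
    (PresentedGroup.mk SomegaRels w : Somega) = 1 := by
  show (QuotientGroup.mk w : PresentedGroup SomegaRels) = 1
  rw [QuotientGroup.eq_one_iff]
  exact Subgroup.subset_normalClosure hw

lemma sigma_mk (i : ℕ+) : Somega.sigma i = PresentedGroup.mk SomegaRels (FreeGroup.of i) := rfl

lemma sq (i : ℕ+) : Somega.sigma i * Somega.sigma i = 1 := by
  have := rel_one (w := FreeGroup.of i * FreeGroup.of i) (Or.inl ⟨i, rfl⟩)
  simp only [map_mul] at this
  exact this

lemma braid (i : ℕ+) : Somega.sigma (i+1) * Somega.sigma i * Somega.sigma (i+1)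
    = Somega.sigma i * Somega.sigma (i+1) * Somega.sigma i := by
  have := rel_one (w := (FreeGroup.of (i + 1) * FreeGroup.of i * FreeGroup.of (i + 1)) *
    (FreeGroup.of i * FreeGroup.of (i + 1) * FreeGroup.of i)⁻¹) (Or.inr (Or.inl ⟨i, rfl⟩))
  simp only [map_mul, map_inv, mul_inv_eq_one] at this
  exact this

lemma comm {j k : ℕ+} (h : j ≤ k) : Somega.sigma (k+2) * Somega.sigma j
    = Somega.sigma j * Somega.sigma (k+2) := by
  have := rel_one (w := (FreeGroup.of (k + 2) * FreeGroup.of j) *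
    (FreeGroup.of j * FreeGroup.of (k + 2))⁻¹) (Or.inr (Or.inr ⟨j, k, h, rfl⟩))
  simp only [map_mul, map_inv, mul_inv_eq_one] at this
  exact this

/-- `p i` is the positive natural `i+1`. -/
def p (i : ℕ) : ℕ+ := ⟨i+1, i.succ_pos⟩

@[simp] lemma p_val (i : ℕ) : ((p i : ℕ+) : ℕ) = i + 1 := rfl

lemma p_inj : Function.Injective p := fun i j h => by
  have := congrArg PNat.val h
  simpa [p] using this

lemma p_ne {i j : ℕ} (h : i ≠ j) : p i ≠ p j := fun e => h (p_inj e)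

lemma p_add_one (i : ℕ) : p i + 1 = p (i+1) := rfl

/-- The generator `σ_{i+1}` indexed by naturals. -/
def g (i : ℕ) : Somega := Somega.sigma (p i)

lemma g_sq (i : ℕ) : g i * g i = 1 := sq _

lemma g_inv (i : ℕ) : (g i)⁻¹ = g i := by
  rw [inv_eq_iff_mul_eq_one]; exact g_sq i

lemma g_braid (i : ℕ) : g (i+1) * g i * g (i+1) = g i * g (i+1) * g i := by
  have := braid (p i)
  simpa [g, p_add_one] using this

lemma g_comm {a b : ℕ} (h : a + 2 ≤ b) : g b * g a = g a * g b := by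
  have h2 : p (b - 2) + 2 = p b := by
    apply PNat.coe_injective
    push_cast [p_val]
    omega
  have hle : p a ≤ p (b - 2) := by
    rw [← PNat.coe_le_coe, p_val, p_val]
    omega
  have := comm hle
  rw [h2] at this
  simpa [g] using this

@[simp] lemma π_g (i : ℕ) : π (g i) = Equiv.swap (p i) (p (i+1)) := by
  simp [g, π_sigma, p_add_one]

end SOm

namespace SOm

/-- `desc k j = g (k+j-1) * ⋯ * g (k+1) * g k` (descending word of length `j`). -/
def desc (k : ℕ) : ℕ → Somega
  | 0 => 1
  | j+1 => g (k + j) * desc k j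

@[simp] lemma desc_zero (k : ℕ) : desc k 0 = 1 := rfl
lemma desc_succ (k j : ℕ) : desc k (j+1) = g (k + j) * desc k j := rfl
@[simp] lemma desc_one (k : ℕ) : desc k 1 = g k := by simp [desc]

lemma desc_split (k a b : ℕ) : desc k (a + b) = desc (k + a) b * desc k a := by
  induction b with
  | zero => simp
  | succ b ih =>
      have : a + (b+1) = (a + b) + 1 := rfl
      rw [this, desc_succ, ih, desc_succ, mul_assoc]
      congr 2
      omega

lemma desc_succ_right (k j : ℕ) : desc k (j+1) = desc (k+1) j * g k := by
  have := desc_split k 1 j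
  rw [show (1 + j) = j + 1 from by omega] at this
  simpa using this

lemma g_comm_desc {i k : ℕ} (h : i + 2 ≤ k) (j : ℕ) : g i * desc k j = desc k j * g i := by
  induction j with
  | zero => simp
  | succ j ih =>
      rw [desc_succ, ← mul_assoc, ← g_comm (by omega), mul_assoc, ih, ← mul_assoc]

lemma desc_comm_g {i k j : ℕ} (h : k + j + 1 ≤ i) : desc k j * g i = g i * desc k j := by
  induction j with
  | zero => simp
  | succ j ih =>
      rw [desc_succ, mul_assoc, ih (by omega), ← mul_assoc, ← g_comm (a := k + j) (b := i) (by omega), mul_assoc]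

/-- The subgroup generated by `g 0, …, g (n-1)`. -/
def H (n : ℕ) : Subgroup Somega := Subgroup.closure (g '' Set.Iio n)

lemma H_mono {m n : ℕ} (h : m ≤ n) : H m ≤ H n :=
  Subgroup.closure_mono (Set.image_mono (Set.Iio_subset_Iio h))

lemma g_mem_H {i n : ℕ} (h : i < n) : g i ∈ H n :=
  Subgroup.subset_closure ⟨i, h, rfl⟩

lemma desc_mem_H {k j n : ℕ} (h : k + j ≤ n) : desc k j ∈ H n := by
  induction j with
  | zero => simp [one_mem]
  | succ j ih =>
      rw [desc_succ]
      exact mul_mem (g_mem_H (by omega)) (ih (by omega))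

end SOm

namespace SOm

lemma g_braid' (i : ℕ) (x : Somega) :
    g (i+1) * (g i * (g (i+1) * x)) = g i * (g (i+1) * (g i * x)) := by
  rw [← mul_assoc, ← mul_assoc, g_braid, mul_assoc, mul_assoc]

lemma step (n k i : ℕ) (hk : k ≤ n+1) (hi : i ≤ n) :
    ∃ h ∈ H n, ∃ k', k' ≤ n+1 ∧ desc k (n+1-k) * g i = h * desc k' (n+1-k') := by
  rcases Nat.lt_or_ge i k with hik | hik
  · rcases eq_or_lt_of_le (Nat.succ_le_of_lt hik) with he | hlt
    · -- i+1 = k : extend downwards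
      refine ⟨1, one_mem _, i, by omega, ?_⟩
      have h1 : desc i (n+1-i) = desc (i+1) (n-i) * g i := by
        have := desc_succ_right i (n - i)
        rwa [show n - i + 1 = n+1-i from by omega] at this
      rw [one_mul, h1, ← he, show n - i = n + 1 - (i+1) from by omega]
    · -- i + 2 ≤ k : commute
      refine ⟨g i, g_mem_H (by omega), k, hk, ?_⟩
      rw [← g_comm_desc hlt]
  · rcases Nat.eq_or_lt_of_le hik with he | hlt
    · -- i = k : cancel the last letter
      subst he
      refine ⟨1, one_mem _, k+1, by omega, ?_⟩
      have h1 : desc k (n+1-k) = desc (k+1) (n-k) * g k := by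
        have := desc_succ_right k (n - k)
        rwa [show n - k + 1 = n+1-k from by omega] at this
      rw [one_mul, h1, mul_assoc, g_sq, mul_one, show n + 1 - (k+1) = n-k from by omega]
    · -- k < i ≤ n : braid
      refine ⟨g (i-1), g_mem_H (by omega), k, hk, ?_⟩
      have key : desc k (n+1-k) = desc (i+1) (n-i) * (g i * (g (i-1) * desc k (i-1-k))) := by
        have h1 : desc k (n+1-k) = desc (i+1) (n-i) * desc k (i+1-k) := by
          have := desc_split k (i+1-k) (n-i)
          rwa [show i+1-k + (n-i) = n+1-k from by omega,
            show k + (i+1-k) = i+1 from by omega] at this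
        have h3 : desc k (i+1-k) = desc (i-1) 2 * desc k (i-1-k) := by
          have := desc_split k (i-1-k) 2
          rwa [show (i-1-k)+2 = i+1-k from by omega,
            show k+(i-1-k) = i-1 from by omega] at this
        have h4 : desc (i-1) 2 = g i * g (i-1) := by
          rw [show (2:ℕ) = 1 + 1 from rfl, desc_succ, desc_one,
            show i-1+1 = i from by omega]
        rw [h1, h3, h4, mul_assoc]
      calc desc k (n+1-k) * g i
          = desc (i+1) (n-i) * (g i * (g (i-1) * (desc k (i-1-k) * g i))) := by
            rw [key]; simp only [mul_assoc]
        _ = desc (i+1) (n-i) * (g i * (g (i-1) * (g i * desc k (i-1-k)))) := by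
            rw [desc_comm_g (by omega)]
        _ = desc (i+1) (n-i) * (g (i-1) * (g i * (g (i-1) * desc k (i-1-k)))) := by
            have := g_braid' (i-1) (desc k (i-1-k))
            rw [show i-1+1 = i from by omega] at this
            rw [this]
        _ = g (i-1) * (desc (i+1) (n-i) * (g i * (g (i-1) * desc k (i-1-k)))) := by
            rw [← mul_assoc, ← g_comm_desc (by omega), mul_assoc]
        _ = g (i-1) * desc k (n+1-k) := by rw [key]

lemma mem_coset_form {n : ℕ} {x : Somega} (hx : x ∈ H (n+1)) :
    ∃ h ∈ H n, ∃ k, k ≤ n+1 ∧ x = h * desc k (n+1-k) := by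
  induction hx using Subgroup.closure_induction_right with
  | one => exact ⟨1, one_mem _, n+1, le_refl _, by simp⟩
  | mul_right x hx y hy ih =>
      obtain ⟨i, hi, rfl⟩ := hy
      obtain ⟨h, hh, k, hk, rfl⟩ := ih
      simp only [Set.mem_Iio] at hi
      obtain ⟨h', hh', k', hk', he⟩ := step n k i hk (by omega)
      exact ⟨h * h', mul_mem hh hh', k', hk', by rw [mul_assoc, he, ← mul_assoc]⟩
  | mul_inv_cancel x hx y hy ih =>
      obtain ⟨i, hi, rfl⟩ := hy
      obtain ⟨h, hh, k, hk, rfl⟩ := ih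
      simp only [Set.mem_Iio] at hi
      obtain ⟨h', hh', k', hk', he⟩ := step n k i hk (by omega)
      rw [g_inv]
      exact ⟨h * h', mul_mem hh hh', k', hk', by rw [mul_assoc, he, ← mul_assoc]⟩

end SOm

namespace SOm

lemma π_desc_apply (k j : ℕ) : π (desc k j) (p k) = p (k + j) := by
  induction j with
  | zero => simp
  | succ j ih =>
      rw [desc_succ, map_mul, Equiv.Perm.mul_apply, ih, π_g, ← Nat.add_assoc,
        Equiv.swap_apply_left]

lemma π_desc_fix {k j m : ℕ} (h : m < k ∨ k + j < m) : π (desc k j) (p m) = p m := by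
  induction j with
  | zero => simp
  | succ j ih =>
      rw [desc_succ, map_mul, Equiv.Perm.mul_apply, ih (by omega), π_g]
      exact Equiv.swap_apply_of_ne_of_ne (p_ne (by omega)) (p_ne (by omega))

lemma H_fix {n : ℕ} {x : Somega} (hx : x ∈ H n) {m : ℕ} (hm : n < m) : π x (p m) = p m := by
  induction hx using Subgroup.closure_induction with
  | mem y hy =>
      obtain ⟨i, hi, rfl⟩ := hy
      simp only [Set.mem_Iio] at hi
      rw [π_g]
      exact Equiv.swap_apply_of_ne_of_ne (p_ne (by omega)) (p_ne (by omega))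
  | one => simp
  | mul a b ha hb iha ihb => rw [map_mul, Equiv.Perm.mul_apply, ihb, iha]
  | inv a ha iha =>
      rw [map_inv]
      exact Equiv.injective (π a) (by rw [← Equiv.Perm.mul_apply, mul_inv_cancel, Equiv.Perm.one_apply, iha])

lemma ker_H : ∀ n : ℕ, ∀ x ∈ H n, π x = 1 → x = 1 := by
  intro n
  induction n with
  | zero =>
      intro x hx _
      have he : g '' Set.Iio 0 = (∅ : Set Somega) := by
        have : Set.Iio 0 = (∅ : Set ℕ) := by ext y; simp
        rw [this, Set.image_empty]
      rw [H, he, Subgroup.closure_empty, Subgroup.mem_bot] at hx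
      exact hx
  | succ n ih =>
      intro x hx hπ
      obtain ⟨h, hh, k, hk, rfl⟩ := mem_coset_form hx
      rcases Nat.lt_or_ge k (n+1) with hlt | hge
      · exfalso
        have : π (h * desc k (n+1-k)) (p k) = p (n+1) := by
          rw [map_mul, Equiv.Perm.mul_apply, π_desc_apply,
            show k + (n+1-k) = n+1 from by omega]
          exact H_fix hh (by omega)
        rw [hπ] at this
        have h2 : p k = p (n+1) := by simpa using this
        exact p_ne (show k ≠ n+1 by omega) h2
      · have hk1 : k = n+1 := by omega
        subst hk1
        simp only [Nat.sub_self, desc_zero, mul_one] at hπ ⊢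
        exact ih _ hh hπ

lemma exists_mem_H (x : Somega) : ∃ n, x ∈ H n := by
  have hdir : Directed (· ≤ ·) H := fun a b =>
    ⟨max a b, H_mono (le_max_left _ _), H_mono (le_max_right _ _)⟩
  have hx : x ∈ ⨆ n, H n := by
    refine PresentedGroup.generated_by SomegaRels _ (fun j => ?_) x
    have : (PresentedGroup.of j : Somega) = g j.natPred := by
      show Somega.sigma j = Somega.sigma (p j.natPred)
      congr 1
      apply PNat.coe_injective
      rw [p_val, PNat.natPred]
      have := j.pos
      omega
    rw [this]
    exact Subgroup.mem_iSup_of_mem (j.natPred + 1) (g_mem_H (Nat.lt_succ_self _))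
  rwa [Subgroup.mem_iSup_of_directed hdir] at hx

lemma π_injective : Function.Injective π := by
  intro x y hxy
  obtain ⟨n, hn⟩ := exists_mem_H (x * y⁻¹)
  have : x * y⁻¹ = 1 := ker_H n _ hn (by rw [map_mul, map_inv, hxy, mul_inv_cancel])
  exact mul_inv_eq_one.mp this

end SOm

namespace SOm

lemma p_natPred (q : ℕ+) : p q.natPred = q := by
  apply PNat.coe_injective
  rw [p_val, PNat.natPred]
  have := q.pos
  omega

/-- A word representing the transposition of `p i` and `p j`, for `i < j`. -/
def T (i j : ℕ) : Somega := (desc i (j-1-i))⁻¹ * g (j-1) * desc i (j-1-i)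

lemma π_T {i j : ℕ} (h : i < j) : π (T i j) = Equiv.swap (p i) (p j) := by
  have hu1 : π (desc i (j-1-i)) (p i) = p (j-1) := by
    rw [π_desc_apply, show i + (j-1-i) = j-1 from by omega]
  have hu2 : π (desc i (j-1-i)) (p j) = p j := π_desc_fix (by omega)
  have hv1 : (π (desc i (j-1-i)))⁻¹ (p (j-1)) = p i := by
    rw [← hu1, ← Equiv.Perm.mul_apply, inv_mul_cancel, Equiv.Perm.one_apply]
  have hv2 : (π (desc i (j-1-i)))⁻¹ (p j) = p j := by
    rw [← hu2, ← Equiv.Perm.mul_apply, inv_mul_cancel, Equiv.Perm.one_apply, hu2]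
  have key := Equiv.swap_apply_apply (π (desc i (j-1-i)))⁻¹ (p (j-1)) (p j)
  rw [hv1, hv2, inv_inv] at key
  rw [T, map_mul, map_mul, map_inv, π_g, show j-1+1 = j from by omega]
  exact key.symm

lemma π_T_left {i j : ℕ} (h : i < j) : π (T i j) (p i) = p j := by
  rw [π_T h, Equiv.swap_apply_left]

lemma π_T_fix {i j m : ℕ} (h : i < j) (h1 : m ≠ i) (h2 : m ≠ j) : π (T i j) (p m) = p m := by
  rw [π_T h]
  exact Equiv.swap_apply_of_ne_of_ne (p_ne h1) (p_ne h2)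

lemma tri_swap {α : Type*} [DecidableEq α] {a b c : α} (hab : a ≠ b) (hbc : b ≠ c)
    (hac : a ≠ c) : Equiv.swap b c * Equiv.swap a c = Equiv.swap a b * Equiv.swap b c := by
  ext x
  simp only [Equiv.Perm.mul_apply, Equiv.swap_apply_def]
  split_ifs <;> simp_all

end SOm

namespace SOm

variable {X : Type*} [Group X]

lemma key_kill (f : Somega →* X) (t : Somega) (ht : t ≠ 1) (h : f t = 1) (i : ℕ) :
    f (g i * g (i+1)) = 1 := by
  -- π t is a nontrivial permutation
  have hπt : π t ≠ 1 := by
    intro h0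
    obtain ⟨n, hn⟩ := exists_mem_H t
    exact ht (ker_H n t hn h0)
  obtain ⟨nt, hnt⟩ := exists_mem_H t
  have hmoved : ∃ a', π t (p a') ≠ p a' := by
    by_contra hc
    push_neg at hc
    apply hπt
    ext q
    rw [← p_natPred q, hc q.natPred, Equiv.Perm.one_apply]
  obtain ⟨a', ha⟩ := hmoved
  have ha'le : a' ≤ nt := by
    by_contra hc
    exact ha (H_fix hnt (by omega))
  set b' : ℕ := (π t (p a')).natPred with hb'def
  have hb : p b' = π t (p a') := p_natPred _
  have hb'ne : b' ≠ a' := by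
    intro e
    apply ha
    rw [← hb, e]
  have hb'le : b' ≤ nt := by
    by_contra hc
    have h1 : π t (p b') = p b' := H_fix hnt (by omega)
    have h2 : p b' = p a' := (π t).injective (by rw [h1, ← hb])
    exact ha (by rw [← hb, h2])
  set c : ℕ := nt + 1 with hcdef
  have htc : π t (p c) = p c := H_fix hnt (by omega)
  set s : Somega := T a' c with hsdef
  set u : Somega := t * s * t⁻¹ * s⁻¹ with hudef
  have hfu : f u = 1 := by
    rw [hudef, map_mul, map_mul, map_mul, map_inv, map_inv, h]
    group
  have hπs : π s = Equiv.swap (p a') (p c) := π_T (by omega)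
  have hπu : π u = Equiv.swap (p b') (p c) * Equiv.swap (p a') (p c) := by
    have key := Equiv.swap_apply_apply (π t) (p a') (p c)
    rw [hb.symm, htc] at key
    rw [hudef, map_mul, map_mul, map_mul, map_inv, map_inv, hπs, ← key, Equiv.swap_inv]
  -- conjugate to the standard position
  set M : ℕ := max nt i + 3 with hMdef
  have hMnt : nt + 2 ≤ M := by omega
  have hMi : i + 3 ≤ M := by omega
  set v1 : Somega := T a' M * T b' (M+1) * T c (M+2) with hv1def
  set v2 : Somega := T i M * T (i+1) (M+1) * T (i+2) (M+2) with hv2def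
  set V : Somega := v2 * v1 with hVdef
  have ev1a : π v1 (p a') = p M := by
    rw [hv1def, map_mul, map_mul, Equiv.Perm.mul_apply, Equiv.Perm.mul_apply,
      π_T_fix (by omega) (by omega) (by omega), π_T_fix (by omega) (by omega) (by omega),
      π_T_left (by omega)]
  have ev1b : π v1 (p b') = p (M+1) := by
    rw [hv1def, map_mul, map_mul, Equiv.Perm.mul_apply, Equiv.Perm.mul_apply,
      π_T_fix (by omega) (by omega) (by omega), π_T_left (by omega),
      π_T_fix (by omega) (by omega) (by omega)]
  have ev1c : π v1 (p c) = p (M+2) := by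
    rw [hv1def, map_mul, map_mul, Equiv.Perm.mul_apply, Equiv.Perm.mul_apply,
      π_T_left (by omega), π_T_fix (by omega) (by omega) (by omega),
      π_T_fix (by omega) (by omega) (by omega)]
  have ev2a : π v2 (p M) = p i := by
    rw [hv2def, map_mul, map_mul, Equiv.Perm.mul_apply, Equiv.Perm.mul_apply,
      π_T_fix (by omega) (by omega) (by omega), π_T_fix (by omega) (by omega) (by omega),
      π_T (show i < M by omega)]
    exact Equiv.swap_apply_right _ _
  have ev2b : π v2 (p (M+1)) = p (i+1) := by
    rw [hv2def, map_mul, map_mul, Equiv.Perm.mul_apply, Equiv.Perm.mul_apply,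
      π_T_fix (by omega) (by omega) (by omega), π_T (show i+1 < M+1 by omega),
      Equiv.swap_apply_right, π_T_fix (by omega) (by omega) (by omega)]
  have ev2c : π v2 (p (M+2)) = p (i+2) := by
    rw [hv2def, map_mul, map_mul, Equiv.Perm.mul_apply, Equiv.Perm.mul_apply,
      π_T (show i+2 < M+2 by omega), Equiv.swap_apply_right,
      π_T_fix (by omega) (by omega) (by omega), π_T_fix (by omega) (by omega) (by omega)]
  have eVa : π V (p a') = p i := by
    rw [hVdef, map_mul, Equiv.Perm.mul_apply, ev1a, ev2a]
  have eVb : π V (p b') = p (i+1) := by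
    rw [hVdef, map_mul, Equiv.Perm.mul_apply, ev1b, ev2b]
  have eVc : π V (p c) = p (i+2) := by
    rw [hVdef, map_mul, Equiv.Perm.mul_apply, ev1c, ev2c]
  set y : Somega := V * u * V⁻¹ with hydef
  have hfy : f y = 1 := by
    rw [hydef, map_mul, map_mul, map_inv, hfu, mul_one, mul_inv_cancel]
  have hπy : π y = Equiv.swap (p (i+1)) (p (i+2)) * Equiv.swap (p i) (p (i+2)) := by
    have k1 := Equiv.swap_apply_apply (π V) (p b') (p c)
    have k2 := Equiv.swap_apply_apply (π V) (p a') (p c)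
    rw [eVb, eVc] at k1
    rw [eVa, eVc] at k2
    rw [hydef, map_mul, map_mul, map_inv, hπu, k1, k2]
    group
  have hπgg : π (g i * g (i+1)) = Equiv.swap (p (i+1)) (p (i+2)) * Equiv.swap (p i) (p (i+2)) := by
    rw [map_mul, π_g, π_g, show i+1+1 = i+2 from rfl]
    exact (tri_swap (p_ne (by omega)) (p_ne (by omega)) (p_ne (by omega))).symm
  have : g i * g (i+1) = y := π_injective (by rw [hπy, hπgg])
  rw [this, hfy]

/-- `f` takes the same value on all generators. -/
lemma f_const (f : Somega →* X) (t : Somega) (ht : t ≠ 1) (h : f t = 1) (i : ℕ) :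
    f (g i) = f (g 0) := by
  induction i with
  | zero => rfl
  | succ i ih =>
      have h1 := key_kill f t ht h i
      rw [map_mul] at h1
      have h2 : f (g (i+1)) * f (g (i+1)) = 1 := by
        rw [← map_mul, g_sq, map_one]
      have : f (g i) = f (g (i+1)) := by
        have := mul_right_cancel (a := f (g i)) (b := f (g (i+1))) (c := f (g (i+1)))
        exact this (by rw [h1, h2])
      rw [← this, ih]

end SOm


/-- Maximality of `Sω`: if `t ≠ 1` in `Sω` and `X` is a quotient of `Sω` in which the
additional relation `t = 1` holds, then all the generators coincide in `X`:
`σ_m = σ_n` for all `m, n ∈ ℕ⁺`. -/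
theorem somega_maximality {X : Type*} [Group X] (f : Somega →* X)
    (t : Somega) (ht : t ≠ 1) (h : f t = 1) (m n : ℕ+) :
    f (Somega.sigma m) = f (Somega.sigma n) := by
  have hm : SOm.g m.natPred = Somega.sigma m := by
    unfold SOm.g; rw [SOm.p_natPred]
  have hn : SOm.g n.natPred = Somega.sigma n := by
    unfold SOm.g; rw [SOm.p_natPred]
  rw [← hm, ← hn, SOm.f_const f t ht h]
  exact (SOm.f_const f t ht h n.natPred).symm
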